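/- Let L and L' be positive integers. Let A be an L×L full-rank row-stochastic matrix with stationary distribution π = (π₁,…,π_L) having positive entries, and let f₁,…,f_L be linearly independent square-integrable probability densities on ℝᵈ; define g_ℓ(y) = Σ_{m=1}^L A[ℓ,m] f_m(y) and p(y₁,y₂) = Σ_{ℓ=1}^L π_ℓ f_ℓ(y₁) g_ℓ(y₂). Let (L', A', π', (f'_ℓ)) satisfy the same hypotheses, with associated pair density p'. If p(y₁,y₂) = p'(y₁,y₂) for almost every (y₁,y₂) ∈ ℝᵈ×ℝᵈ, then L = L'. (In particular, the order L of the hidden Markov model is identifiable from the distribution of a pair of consecutive observations.) -/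

import Mathlib

open MeasureTheory

set_option maxHeartbeats 1000000

private lemma lp_coeFn_finset_sum {α : Type*} [MeasurableSpace α] {μ : Measure α}
    {q : ENNReal} {ι : Type*} (s : Finset ι) (v : ι → Lp ℝ q μ) :
    ⇑(∑ i ∈ s, v i) =ᵐ[μ] fun z => ∑ i ∈ s, (v i : α → ℝ) z := by
  classical
  induction s using Finset.induction with
  | empty => simp only [Finset.sum_empty]; exact Lp.coeFn_zero ℝ q μ
  | insert _ _ h ih =>
    rename_i a s
    rw [Finset.sum_insert h]
    refine (Lp.coeFn_add _ _).trans ?_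
    filter_upwards [ih] with z hz
    simp only [Pi.add_apply, hz]
    rw [Finset.sum_insert h]

private lemma mem_span_aux {Ω : Type*} [MeasurableSpace Ω] {μ : Measure Ω}
    {V : Type*} [AddCommGroup V] [Module ℝ V] {L L' : ℕ}
    {u : Fin L → V} {u' : Fin L' → V} {c : Fin L → Ω → ℝ} {c' : Fin L' → Ω → ℝ}
    (h : ∀ᵐ ω ∂μ, ∑ ℓ, c ℓ ω • u ℓ = ∑ k, c' k ω • u' k)
    (hc' : ∀ ξ : Fin L' → ℝ, (∀ᵐ ω ∂μ, ∑ k, ξ k * c' k ω = 0) → ξ = 0)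
    (j : Fin L') : u' j ∈ Submodule.span ℝ (Set.range u) := by
  set S := Submodule.span ℝ (Set.range u) with hS
  rw [← Submodule.Quotient.mk_eq_zero S, ← Module.forall_dual_apply_eq_zero_iff ℝ]
  intro φ
  set ψ : V →ₗ[ℝ] ℝ := φ.comp S.mkQ with hψ
  have hψS : ∀ ℓ, ψ (u ℓ) = 0 := by
    intro ℓ
    have h0 : S.mkQ (u ℓ) = 0 := by
      rw [Submodule.mkQ_apply, Submodule.Quotient.mk_eq_zero]
      exact Submodule.subset_span ⟨ℓ, rfl⟩
    simp [hψ, h0]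
  have hz : (fun k => ψ (u' k)) = 0 := by
    apply hc'
    filter_upwards [h] with ω hω
    have : ψ (∑ k, c' k ω • u' k) = 0 := by
      rw [← hω, map_sum]
      simp [hψS]
    calc ∑ k, ψ (u' k) * c' k ω = ψ (∑ k, c' k ω • u' k) := by
          rw [map_sum]; simp [mul_comm]
      _ = 0 := this
  have := congrFun hz j
  simpa [hψ] using this

/-- **Identifiability of the order of an HMM from the distribution of a pair of
consecutive observations.**  If two finite-state HMMs (with full-rank row-stochastic
transition matrices, positive stationary distributions, and linearly independent
square-integrable emission densities) give rise to the same density of a pair of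
consecutive observations (almost everywhere), then they have the same order. -/
theorem hmm_order_identifiable_from_pair_density
    {d L L' : ℕ} (hL : 0 < L) (hL' : 0 < L')
    (A : Matrix (Fin L) (Fin L) ℝ) (w : Fin L → ℝ)
    (f : Fin L → (Fin d → ℝ) → ℝ)
    (A' : Matrix (Fin L') (Fin L') ℝ) (w' : Fin L' → ℝ)
    (f' : Fin L' → (Fin d → ℝ) → ℝ)
    (hA_nonneg : ∀ i j, 0 ≤ A i j) (hA_rows : ∀ i, ∑ j, A i j = 1)
    (hA_rank : A.det ≠ 0)
    (hw_pos : ∀ i, 0 < w i) (hw_sum : ∑ i, w i = 1)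
    (hw_stat : ∀ j, ∑ i, w i * A i j = w j)
    (hf_nonneg : ∀ ℓ z, 0 ≤ f ℓ z)
    (hf_prob : ∀ ℓ, ∫ z : Fin d → ℝ, f ℓ z = 1)
    (hf_L2 : ∀ ℓ, MemLp (f ℓ) 2 (volume : Measure (Fin d → ℝ)))
    (hf_li : ∀ ξ : Fin L → ℝ,
      (∀ᵐ z : Fin d → ℝ, ∑ ℓ, ξ ℓ * f ℓ z = 0) → ξ = 0)
    (hA'_nonneg : ∀ i j, 0 ≤ A' i j) (hA'_rows : ∀ i, ∑ j, A' i j = 1)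
    (hA'_rank : A'.det ≠ 0)
    (hw'_pos : ∀ i, 0 < w' i) (hw'_sum : ∑ i, w' i = 1)
    (hw'_stat : ∀ j, ∑ i, w' i * A' i j = w' j)
    (hf'_nonneg : ∀ ℓ z, 0 ≤ f' ℓ z)
    (hf'_prob : ∀ ℓ, ∫ z : Fin d → ℝ, f' ℓ z = 1)
    (hf'_L2 : ∀ ℓ, MemLp (f' ℓ) 2 (volume : Measure (Fin d → ℝ)))
    (hf'_li : ∀ ξ : Fin L' → ℝ,
      (∀ᵐ z : Fin d → ℝ, ∑ ℓ, ξ ℓ * f' ℓ z = 0) → ξ = 0)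
    -- the two pair densities coincide almost everywhere
    (hpp' : ∀ᵐ y : (Fin d → ℝ) × (Fin d → ℝ),
      ∑ ℓ, w ℓ * f ℓ y.1 * (∑ m, A ℓ m * f m y.2)
        = ∑ ℓ, w' ℓ * f' ℓ y.1 * (∑ m, A' ℓ m * f' m y.2)) :
    L = L' := by
  classical
  let ν : Measure (Fin d → ℝ) := volume
  -- the emission densities as elements of L²
  set u : Fin L → Lp ℝ 2 ν := fun ℓ => (hf_L2 ℓ).toLp (f ℓ) with hu
  set u' : Fin L' → Lp ℝ 2 ν := fun k => (hf'_L2 k).toLp (f' k) with hu'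
  -- representation of linear combinations
  have sum_repr : ∀ ξ : Fin L → ℝ,
      ⇑(∑ ℓ, ξ ℓ • u ℓ) =ᵐ[ν] fun z => ∑ ℓ, ξ ℓ * f ℓ z := by
    intro ξ
    refine (lp_coeFn_finset_sum Finset.univ (fun ℓ => ξ ℓ • u ℓ)).trans ?_
    have h1 : ∀ᵐ z ∂ν, ∀ ℓ, ((ξ ℓ • u ℓ : Lp ℝ 2 ν) : (Fin d → ℝ) → ℝ) z
        = ξ ℓ * f ℓ z := by
      rw [ae_all_iff]
      intro ℓ
      filter_upwards [Lp.coeFn_smul (ξ ℓ) (u ℓ), (hf_L2 ℓ).coeFn_toLp] with z h2 h3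
      rw [h2]; simp [h2, hu, h3]
    filter_upwards [h1] with z hz
    exact Finset.sum_congr rfl fun ℓ _ => hz ℓ
  have sum_repr' : ∀ ξ : Fin L' → ℝ,
      ⇑(∑ k, ξ k • u' k) =ᵐ[ν] fun z => ∑ k, ξ k * f' k z := by
    intro ξ
    refine (lp_coeFn_finset_sum Finset.univ (fun k => ξ k • u' k)).trans ?_
    have h1 : ∀ᵐ z ∂ν, ∀ k, ((ξ k • u' k : Lp ℝ 2 ν) : (Fin d → ℝ) → ℝ) z
        = ξ k * f' k z := by
      rw [ae_all_iff]
      intro k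
      filter_upwards [Lp.coeFn_smul (ξ k) (u' k), (hf'_L2 k).coeFn_toLp] with z h2 h3
      rw [h2]; simp [h2, hu', h3]
    filter_upwards [h1] with z hz
    exact Finset.sum_congr rfl fun k _ => hz k
  -- linear independence in L²
  have hu_li : LinearIndependent ℝ u := by
    rw [Fintype.linearIndependent_iff]
    intro ξ h0 i
    have : ∀ᵐ z ∂ν, ∑ ℓ, ξ ℓ * f ℓ z = 0 := by
      filter_upwards [sum_repr ξ, Lp.coeFn_zero (E := ℝ) (p := 2) (μ := ν)] with z h1 h2
      rw [← h1, h0, h2]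
      rfl
    exact congrFun (hf_li ξ this) i
  have hu'_li : LinearIndependent ℝ u' := by
    rw [Fintype.linearIndependent_iff]
    intro ξ h0 i
    have : ∀ᵐ z ∂ν, ∑ k, ξ k * f' k z = 0 := by
      filter_upwards [sum_repr' ξ, Lp.coeFn_zero (E := ℝ) (p := 2) (μ := ν)] with z h1 h2
      rw [← h1, h0, h2]
      rfl
    exact congrFun (hf'_li ξ this) i
  -- coefficient independence
  have hcoef : ∀ ξ : Fin L → ℝ,
      (∀ᵐ z ∂ν, ∑ ℓ, ξ ℓ * (w ℓ * ∑ m, A ℓ m * f m z) = 0) → ξ = 0 := by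
    intro ξ h
    have h2 : ∀ᵐ z ∂ν, ∑ m, (∑ ℓ, ξ ℓ * w ℓ * A ℓ m) * f m z = 0 := by
      filter_upwards [h] with z hz
      rw [← hz]
      simp only [Finset.mul_sum, Finset.sum_mul]
      rw [Finset.sum_comm]
      exact Finset.sum_congr rfl fun ℓ _ => Finset.sum_congr rfl fun m _ => by ring
    have h3 := hf_li _ h2
    have h4 : Matrix.vecMul (fun ℓ => ξ ℓ * w ℓ) A = 0 := by
      funext m
      simpa [Matrix.vecMul, dotProduct] using congrFun h3 m
    have h5 : (fun ℓ => ξ ℓ * w ℓ) = 0 := by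
      have := congrArg (fun v => Matrix.vecMul v A⁻¹) h4
      simpa [Matrix.vecMul_vecMul,
        Matrix.mul_nonsing_inv A ((isUnit_iff_ne_zero).2 hA_rank)] using this
    funext ℓ
    have h6 : ξ ℓ * w ℓ = 0 := congrFun h5 ℓ
    exact (mul_eq_zero.1 h6).resolve_right (hw_pos ℓ).ne'
  have hcoef' : ∀ ξ : Fin L' → ℝ,
      (∀ᵐ z ∂ν, ∑ k, ξ k * (w' k * ∑ m, A' k m * f' m z) = 0) → ξ = 0 := by
    intro ξ h
    have h2 : ∀ᵐ z ∂ν, ∑ m, (∑ k, ξ k * w' k * A' k m) * f' m z = 0 := by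
      filter_upwards [h] with z hz
      rw [← hz]
      simp only [Finset.mul_sum, Finset.sum_mul]
      rw [Finset.sum_comm]
      exact Finset.sum_congr rfl fun k _ => Finset.sum_congr rfl fun m _ => by ring
    have h3 := hf'_li _ h2
    have h4 : Matrix.vecMul (fun k => ξ k * w' k) A' = 0 := by
      funext m
      simpa [Matrix.vecMul, dotProduct] using congrFun h3 m
    have h5 : (fun k => ξ k * w' k) = 0 := by
      have := congrArg (fun v => Matrix.vecMul v A'⁻¹) h4
      simpa [Matrix.vecMul_vecMul,
        Matrix.mul_nonsing_inv A' ((isUnit_iff_ne_zero).2 hA'_rank)] using this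
    funext k
    have h6 : ξ k * w' k = 0 := congrFun h5 k
    exact (mul_eq_zero.1 h6).resolve_right (hw'_pos k).ne'
  -- swap the roles of the two coordinates in the a.e. statement
  have hswap : ∀ᵐ y : (Fin d → ℝ) × (Fin d → ℝ),
      ∑ ℓ, w ℓ * f ℓ y.2 * (∑ m, A ℓ m * f m y.1)
        = ∑ ℓ, w' ℓ * f' ℓ y.2 * (∑ m, A' ℓ m * f' m y.1) := by
    have hmp : MeasurePreserving (Prod.swap : ((Fin d → ℝ) × (Fin d → ℝ)) → _)
        (volume : Measure ((Fin d → ℝ) × (Fin d → ℝ))) volume := by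
      rw [Measure.volume_eq_prod]
      exact Measure.measurePreserving_swap
    exact hmp.quasiMeasurePreserving.ae hpp'
  have hswap2 : ∀ᵐ y₂ ∂ν, ∀ᵐ y₁ ∂ν,
      ∑ ℓ, w ℓ * f ℓ y₁ * (∑ m, A ℓ m * f m y₂)
        = ∑ ℓ, w' ℓ * f' ℓ y₁ * (∑ m, A' ℓ m * f' m y₂) := by
    rw [Measure.volume_eq_prod] at hswap
    exact Measure.ae_ae_of_ae_prod hswap
  -- the key a.e. identity in L²
  have hkey : ∀ᵐ y₂ ∂ν,
      ∑ ℓ, (w ℓ * ∑ m, A ℓ m * f m y₂) • u ℓ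
        = ∑ k, (w' k * ∑ m, A' k m * f' m y₂) • u' k := by
    filter_upwards [hswap2] with y₂ hy₂
    apply Lp.ext (p := 2) (μ := ν)
    calc ⇑(∑ ℓ, (w ℓ * ∑ m, A ℓ m * f m y₂) • u ℓ)
        =ᵐ[ν] fun y₁ => ∑ ℓ, (w ℓ * ∑ m, A ℓ m * f m y₂) * f ℓ y₁ := sum_repr _
      _ =ᵐ[ν] fun y₁ => ∑ k, (w' k * ∑ m, A' k m * f' m y₂) * f' k y₁ := by
          filter_upwards [hy₂] with y₁ h1
          calc ∑ ℓ, (w ℓ * ∑ m, A ℓ m * f m y₂) * f ℓ y₁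
              = ∑ ℓ, w ℓ * f ℓ y₁ * (∑ m, A ℓ m * f m y₂) := by
                exact Finset.sum_congr rfl fun ℓ _ => by ring
            _ = ∑ k, w' k * f' k y₁ * (∑ m, A' k m * f' m y₂) := h1
            _ = ∑ k, (w' k * ∑ m, A' k m * f' m y₂) * f' k y₁ := by
                exact Finset.sum_congr rfl fun k _ => by ring
      _ =ᵐ[ν] ⇑(∑ k, (w' k * ∑ m, A' k m * f' m y₂) • u' k) := (sum_repr' _).symm
  -- the two spans coincide
  have hsub : ∀ j, u' j ∈ Submodule.span ℝ (Set.range u) :=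
    mem_span_aux hkey hcoef'
  have hsub' : ∀ j, u j ∈ Submodule.span ℝ (Set.range u') :=
    mem_span_aux (μ := ν) (u := u') (u' := u)
      (c := fun k y₂ => w' k * ∑ m, A' k m * f' m y₂)
      (c' := fun ℓ y₂ => w ℓ * ∑ m, A ℓ m * f m y₂)
      (by filter_upwards [hkey] with y₂ h; exact h.symm) hcoef
  have hspan : Submodule.span ℝ (Set.range u) = Submodule.span ℝ (Set.range u') := by
    apply le_antisymm
    · rw [Submodule.span_le]
      rintro _ ⟨ℓ, rfl⟩
      exact hsub' ℓ
    · rw [Submodule.span_le]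
      rintro _ ⟨k, rfl⟩
      exact hsub k
  have h1 := finrank_span_eq_card hu_li
  have h2 := finrank_span_eq_card hu'_li
  rw [hspan] at h1
  rw [h1] at h2
  simpa using h2
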